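/- Let γ : [0,1] → ℂ be a continuously differentiable path (the contour C) with endpoints A = γ(0), B = γ(1). Let K : ℂ → ℂ be continuous, and let F : ℂ × ℂ → ℂ be continuous and holomorphic in its second variable with derivative R(α,γ) := ∂F/∂γ(α,γ) continuous. Assume R satisfies the dual resolvent identity R(α,γ) + (1/(2π))·∫_C R(α,β)·K(β−γ) dβ = −(1/(2π))·K(α−γ) for all α, γ ∈ ℂ. Let D₋ : ℂ → ℂ be a continuous function satisfying D₋(α) + (1/(2π))·∫_C K(α−β)·D₋(β) dβ = 1/(2π) for all α ∈ ℂ. Then D₋(α) = (1/(2π))·(1 + F(α,B) − F(α,A)) for all α ∈ ℂ. -/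

import Mathlib

open MeasureTheory

/-- Contour integral of `f` along the path `γ : [0,1] → ℂ`:
`∫_C f(β) dβ := ∫₀¹ f(γ(t)) γ'(t) dt`. -/
noncomputable def cInt (γ : ℝ → ℂ) (f : ℂ → ℂ) : ℂ :=
  ∫ t in (0:ℝ)..1, f (γ t) * deriv γ t

open MeasureTheory intervalIntegral in
/-- Fubini for interval integrals of continuous functions on `[0,1]²`. -/
lemma swap_aux (G : ℝ → ℝ → ℂ) (hG : Continuous fun p : ℝ × ℝ => G p.1 p.2) :
    (∫ t in (0:ℝ)..1, ∫ s in (0:ℝ)..1, G t s)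
      = ∫ s in (0:ℝ)..1, ∫ t in (0:ℝ)..1, G t s := by
  have h01 : (0:ℝ) ≤ 1 := zero_le_one
  have key : Integrable (Function.uncurry G)
      ((volume.restrict (Set.Ioc (0:ℝ) 1)).prod (volume.restrict (Set.Ioc (0:ℝ) 1))) := by
    rw [Measure.prod_restrict]
    exact (hG.continuousOn.integrableOn_compact (isCompact_Icc.prod isCompact_Icc)).mono_set
      (Set.prod_mono Set.Ioc_subset_Icc_self Set.Ioc_subset_Icc_self)
  have := MeasureTheory.integral_integral_swap key
  simpa [intervalIntegral.integral_of_le h01] using this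

theorem stmt_5 (γ : ℝ → ℂ) (hγ : ContDiff ℝ 1 γ)
    (A B : ℂ) (hA : A = γ 0) (hB : B = γ 1)
    (K : ℂ → ℂ) (hK : Continuous K)
    (F : ℂ → ℂ → ℂ) (hFc : Continuous fun p : ℂ × ℂ => F p.1 p.2)
    (hF2 : ∀ a : ℂ, Differentiable ℂ (fun g => F a g))
    (R : ℂ → ℂ → ℂ) (hRdef : ∀ a g : ℂ, R a g = deriv (fun g' => F a g') g)
    (hRc : Continuous fun p : ℂ × ℂ => R p.1 p.2)
    (hres : ∀ a g : ℂ,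
      R a g + (1 / (2 * (Real.pi : ℂ))) * cInt γ (fun β => R a β * K (β - g))
        = -(1 / (2 * (Real.pi : ℂ))) * K (a - g))
    (Dm : ℂ → ℂ) (hDmc : Continuous Dm)
    (hDm : ∀ a : ℂ,
      Dm a + (1 / (2 * (Real.pi : ℂ))) * cInt γ (fun β => K (a - β) * Dm β)
        = 1 / (2 * (Real.pi : ℂ))) :
    ∀ a : ℂ, Dm a = (1 / (2 * (Real.pi : ℂ))) * (1 + F a B - F a A) := by
  intro a
  have hπ : (2 * (Real.pi : ℂ)) ≠ 0 := by
    simp [Complex.ofReal_ne_zero, Real.pi_ne_zero]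
  have hγc : Continuous γ := hγ.continuous
  have hγ' : Continuous (deriv γ) := hγ.continuous_deriv le_rfl
  -- continuity helpers
  have hRγ : Continuous fun t : ℝ => R a (γ t) :=
    hRc.comp (continuous_const.prodMk hγc)
  have hDγ : Continuous fun t : ℝ => Dm (γ t) := hDmc.comp hγc
  -- FTC: ∫ R(a,γ t) γ'(t) dt = F a B - F a A
  have hFTC : (∫ t in (0:ℝ)..1, R a (γ t) * deriv γ t) = F a B - F a A := by
    rw [hA, hB]
    apply intervalIntegral.integral_eq_sub_of_hasDerivAt (f := fun t => F a (γ t))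
    · intro t _
      have hγd : HasDerivAt γ (deriv γ t) t :=
        (hγ.differentiable one_ne_zero t).hasDerivAt
      have hFd : HasDerivAt (fun g => F a g) (R a (γ t)) (γ t) := by
        rw [hRdef]; exact ((hF2 a) (γ t)).hasDerivAt
      have := HasDerivAt.scomp t hFd hγd
      simpa [Function.comp_def, smul_eq_mul, mul_comm] using this
    · exact ((hRγ.mul hγ').intervalIntegrable _ _)
  -- double integrand
  set G : ℝ → ℝ → ℂ := fun t s =>
    R a (γ t) * deriv γ t * (K (γ t - γ s) * (Dm (γ s) * deriv γ s)) with hGdef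
  have hGc : Continuous fun p : ℝ × ℝ => G p.1 p.2 := by
    apply Continuous.mul
    · exact (hRc.comp (continuous_const.prodMk (hγc.comp continuous_fst))).mul
        (hγ'.comp continuous_fst)
    · exact (hK.comp ((hγc.comp continuous_fst).sub (hγc.comp continuous_snd))).mul
        (((hDmc.comp hγc).comp continuous_snd).mul (hγ'.comp continuous_snd))
  -- first evaluation of W
  have hW1 : (∫ t in (0:ℝ)..1, ∫ s in (0:ℝ)..1, G t s)
      = ∫ t in (0:ℝ)..1,
          (R a (γ t) * deriv γ t - 2 * Real.pi * (R a (γ t) * Dm (γ t) * deriv γ t)) := by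
    apply intervalIntegral.integral_congr
    intro t _
    show (∫ s in (0:ℝ)..1, G t s)
        = R a (γ t) * deriv γ t - 2 * Real.pi * (R a (γ t) * Dm (γ t) * deriv γ t)
    have h := hDm (γ t)
    have hS : cInt γ (fun β => K (γ t - β) * Dm β) = 1 - 2 * Real.pi * Dm (γ t) := by
      field_simp at h
      linear_combination h
    have : (∫ s in (0:ℝ)..1, G t s)
        = R a (γ t) * deriv γ t * cInt γ (fun β => K (γ t - β) * Dm β) := by
      rw [cInt, ← intervalIntegral.integral_const_mul]
      apply intervalIntegral.integral_congr
      intro s _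
      simp only [hGdef]; ring
    rw [this, hS]; ring
  -- second evaluation of W after Fubini
  have hW2 : (∫ t in (0:ℝ)..1, ∫ s in (0:ℝ)..1, G t s)
      = ∫ s in (0:ℝ)..1,
          ((-K (a - γ s) - 2 * Real.pi * R a (γ s)) * (Dm (γ s) * deriv γ s)) := by
    rw [swap_aux G hGc]
    apply intervalIntegral.integral_congr
    intro s _
    show (∫ t in (0:ℝ)..1, G t s)
        = (-K (a - γ s) - 2 * Real.pi * R a (γ s)) * (Dm (γ s) * deriv γ s)
    have h := hres a (γ s)
    have hT : cInt γ (fun β => R a β * K (β - γ s))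
        = -K (a - γ s) - 2 * Real.pi * R a (γ s) := by
      field_simp at h
      linear_combination h
    have : (∫ t in (0:ℝ)..1, G t s)
        = cInt γ (fun β => R a β * K (β - γ s)) * (Dm (γ s) * deriv γ s) := by
      rw [cInt, ← intervalIntegral.integral_mul_const]
      apply intervalIntegral.integral_congr
      intro t _
      simp only [hGdef]; ring
    rw [this, hT]
  -- combine
  have hsplit :
      (∫ t in (0:ℝ)..1, (R a (γ t) * deriv γ t + K (a - γ t) * Dm (γ t) * deriv γ t)) = 0 := by
    have hXi : IntervalIntegrable
        (fun t => R a (γ t) * deriv γ t - 2 * Real.pi * (R a (γ t) * Dm (γ t) * deriv γ t))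
        volume 0 1 :=
      (((hRγ.mul hγ').sub (continuous_const.mul ((hRγ.mul hDγ).mul hγ'))).intervalIntegrable _ _)
    have hYi : IntervalIntegrable
        (fun s => (-K (a - γ s) - 2 * Real.pi * R a (γ s)) * (Dm (γ s) * deriv γ s))
        volume 0 1 :=
      ((((hK.comp (continuous_const.sub hγc)).neg.sub (continuous_const.mul hRγ)).mul
        (hDγ.mul hγ')).intervalIntegrable _ _)
    have hXY := hW1.symm.trans hW2
    calc (∫ t in (0:ℝ)..1, (R a (γ t) * deriv γ t + K (a - γ t) * Dm (γ t) * deriv γ t))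
        = ∫ t in (0:ℝ)..1,
            ((R a (γ t) * deriv γ t - 2 * Real.pi * (R a (γ t) * Dm (γ t) * deriv γ t))
              - (-K (a - γ t) - 2 * Real.pi * R a (γ t)) * (Dm (γ t) * deriv γ t)) := by
          apply intervalIntegral.integral_congr; intro t _; ring
      _ = 0 := by rw [intervalIntegral.integral_sub hXi hYi, hXY, sub_self]
  have hJsplit : (∫ t in (0:ℝ)..1, (R a (γ t) * deriv γ t + K (a - γ t) * Dm (γ t) * deriv γ t))
      = (∫ t in (0:ℝ)..1, R a (γ t) * deriv γ t)
        + ∫ t in (0:ℝ)..1, K (a - γ t) * Dm (γ t) * deriv γ t := by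
    apply intervalIntegral.integral_add
    · exact (hRγ.mul hγ').intervalIntegrable _ _
    · exact (((hK.comp (continuous_const.sub hγc)).mul hDγ).mul hγ').intervalIntegrable _ _
  have hJ : cInt γ (fun β => K (a - β) * Dm β) = F a A - F a B := by
    have h0 := hJsplit.symm.trans hsplit
    rw [hFTC] at h0
    rw [cInt]
    linear_combination h0
  have h := hDm a
  rw [hJ] at h
  field_simp at h ⊢
  linear_combination h
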